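/- Let A be an abelian category with finite morphism spaces over a finite field F_q. For objects A, B, C ∈ A, let Ext¹(A,C)_B ⊆ Ext¹(A,C) be the subset of extension classes with middle term isomorphic to B, and let g^B_{A,C} = #{C' ⊆ B : C' ≅ C and B/C' ≅ A}. Then g^B_{A,C} = (|Ext¹(A,C)_B| / |Hom(A,C)|) · (|Aut(B)| / (|Aut(A)|·|Aut(C)|)). -/

import Mathlib

open CategoryTheory Category Limits ZeroObject

universe v u

variable (𝒜 : Type u) [Category.{v} 𝒜] [Abelian 𝒜]

/-- A representative of an extension `0 → C → B → A → 0` of `A` by `C`. -/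
structure ExtRep (A C : 𝒜) where
  B : 𝒜
  ι : C ⟶ B
  π : B ⟶ A
  w : ι ≫ π = 0
  se : (ShortComplex.mk ι π w).ShortExact

/-- Equivalence of extensions. -/
def extEquiv {A C : 𝒜} (E F : ExtRep 𝒜 A C) : Prop :=
  ∃ e : E.B ≅ F.B, E.ι ≫ e.hom = F.ι ∧ e.hom ≫ F.π = E.π

/-- `Ext¹(A, C)` as the set of equivalence classes of extensions. -/
def Ext1 (A C : 𝒜) := Quot (extEquiv 𝒜 (A := A) (C := C))

/-- The subset `Ext¹(A, C)_B ⊆ Ext¹(A, C)` of classes whose middle term is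
isomorphic to `B`. -/
def ext1With (A C B : 𝒜) : Set (Ext1 𝒜 A C) :=
  {x | ∃ E : ExtRep 𝒜 A C, Quot.mk _ E = x ∧ Nonempty (E.B ≅ B)}

/-- The Hall number `g^B_{A,C}`: the number of subobjects `C' ⊆ B` with
`C' ≅ C` and `B/C' ≅ A`. -/
noncomputable def hallG (A C B : 𝒜) : ℕ :=
  Nat.card {S : Subobject B // Nonempty ((S : 𝒜) ≅ C) ∧
    Nonempty (cokernel S.arrow ≅ A)}

section Riedtmann

variable {𝒜}

/-- Transport of short exactness along isomorphisms of the three objects. -/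
theorem transport_se {C₁ B₁ A₁ C₂ B₂ A₂ : 𝒜} {ι₁ : C₁ ⟶ B₁} {π₁ : B₁ ⟶ A₁} {w₁ : ι₁ ≫ π₁ = 0}
    (se : (ShortComplex.mk ι₁ π₁ w₁).ShortExact)
    (u : C₂ ≅ C₁) (e : B₁ ≅ B₂) (v : A₁ ≅ A₂)
    {ι₂ : C₂ ⟶ B₂} {π₂ : B₂ ⟶ A₂}
    (hι : ι₂ = u.hom ≫ ι₁ ≫ e.hom) (hπ : π₂ = e.inv ≫ π₁ ≫ v.hom) :
    ∃ w₂ : ι₂ ≫ π₂ = 0, (ShortComplex.mk ι₂ π₂ w₂).ShortExact := by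
  subst hι hπ
  have w₂ : (u.hom ≫ ι₁ ≫ e.hom) ≫ (e.inv ≫ π₁ ≫ v.hom) = 0 := by
    simp [reassoc_of% w₁]
  refine ⟨w₂, ShortComplex.shortExact_of_iso
    (ShortComplex.isoMk u.symm e v ?_ ?_ :
      (ShortComplex.mk ι₁ π₁ w₁) ≅ (ShortComplex.mk _ _ w₂)) se⟩
  · simp
  · simp

variable (A C B : 𝒜)

/-- The set of short exact sequences `0 → C → B → A → 0` with fixed objects. -/
def SES : Type _ :=
  {p : (C ⟶ B) × (B ⟶ A) // ∃ w : p.1 ≫ p.2 = 0, (ShortComplex.mk p.1 p.2 w).ShortExact}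

variable {A C B}

namespace SES

/-- The inclusion. -/
def ι (p : SES A C B) : C ⟶ B := p.1.1

/-- The projection. -/
def π (p : SES A C B) : B ⟶ A := p.1.2

lemma w (p : SES A C B) : p.ι ≫ p.π = 0 := p.2.choose

/-- The short complex of `p`. -/
def sc (p : SES A C B) : ShortComplex 𝒜 := ShortComplex.mk p.ι p.π p.w

lemma se (p : SES A C B) : p.sc.ShortExact := p.2.choose_spec

instance (p : SES A C B) : Mono p.ι := p.se.mono_f
instance (p : SES A C B) : Epi p.π := p.se.epi_g

@[ext] lemma ext {p q : SES A C B} (h1 : p.ι = q.ι) (h2 : p.π = q.π) : p = q := by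
  apply Subtype.ext
  exact Prod.ext h1 h2

/-- The `ExtRep` associated to an element of `SES A C B`. -/
def toRep (p : SES A C B) : ExtRep 𝒜 A C := ⟨B, p.ι, p.π, p.w, p.se⟩

end SES

lemma extEquiv_equivalence : Equivalence (extEquiv 𝒜 (A := A) (C := C)) := by
  constructor
  · intro E
    exact ⟨Iso.refl _, by simp, by simp⟩
  · rintro E F ⟨e, h1, h2⟩
    refine ⟨e.symm, ?_, ?_⟩
    · rw [← h1]; simp
    · rw [← h2]; simp
  · rintro E F G ⟨e, h1, h2⟩ ⟨f, h3, h4⟩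
    refine ⟨e ≪≫ f, ?_, ?_⟩
    · simp [← h3, ← h1]
    · simp [h4, h2]

/-- The action of `Aut B` on short exact sequences. -/
instance : MulAction (Aut B) (SES A C B) where
  smul e p := ⟨(p.ι ≫ e.hom, e.inv ≫ p.π),
    transport_se p.se (Iso.refl C) e (Iso.refl A) (by simp) (by simp)⟩
  one_smul p := by
    apply SES.ext
    · show p.ι ≫ (Iso.refl B).hom = p.ι
      simp
    · show (Iso.refl B).inv ≫ p.π = p.π
      simp
  mul_smul e f p := by
    apply SES.ext
    · show p.ι ≫ (f.trans e).hom = (p.ι ≫ f.hom) ≫ e.hom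
      exact (Category.assoc _ _ _).symm
    · show (f.trans e).inv ≫ p.π = e.inv ≫ f.inv ≫ p.π
      exact Category.assoc _ _ _

lemma smul_ι (e : Aut B) (p : SES A C B) : (e • p).ι = p.ι ≫ e.hom := rfl
lemma smul_π (e : Aut B) (p : SES A C B) : (e • p).π = e.inv ≫ p.π := rfl

lemma smul_eq_iff (e : Aut B) (p q : SES A C B) :
    e • p = q ↔ (p.ι ≫ e.hom = q.ι ∧ e.hom ≫ q.π = p.π) := by
  constructor
  · rintro rfl
    refine ⟨(smul_ι e p).symm, ?_⟩
    rw [smul_π]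
    exact Iso.hom_inv_id_assoc (e : B ≅ B) p.π
  · rintro ⟨h1, h2⟩
    apply SES.ext
    · rw [smul_ι, h1]
    · rw [smul_π, ← h2]
      exact Iso.inv_hom_id_assoc (e : B ≅ B) q.π

/-- The class of a short exact sequence in `ext1With`. -/
def cls (p : SES A C B) : ext1With 𝒜 A C B :=
  ⟨Quot.mk _ p.toRep, p.toRep, rfl, ⟨Iso.refl B⟩⟩

lemma cls_eq_iff (p q : SES A C B) :
    cls p = cls q ↔ extEquiv 𝒜 p.toRep q.toRep := by
  rw [Subtype.ext_iff]
  show Quot.mk _ _ = Quot.mk _ _ ↔ _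
  rw [Quot.eq]
  exact (extEquiv_equivalence (A := A) (C := C)).eqvGen_iff

lemma mem_orbit_iff_cls_eq (p q : SES A C B) :
    q ∈ MulAction.orbit (Aut B) p ↔ cls q = cls p := by
  rw [cls_eq_iff]
  constructor
  · rintro ⟨e, rfl⟩
    refine ⟨e.symm, ?_, ?_⟩
    · show (e • p).ι ≫ e.inv = p.ι
      rw [smul_ι]
      exact ((Category.assoc _ _ _).trans (congrArg (p.ι ≫ ·) (Iso.hom_inv_id (e : B ≅ B)))).trans (comp_id _)
    · show e.inv ≫ p.π = (e • p).π
      rw [smul_π]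
  · rintro ⟨e, h1, h2⟩
    have h1' : q.ι ≫ e.hom = p.ι := h1
    have h2' : e.hom ≫ p.π = q.π := h2
    let a : Aut B := e.symm
    refine ⟨a, ?_⟩
    show a • p = q
    rw [smul_eq_iff]
    constructor
    · show p.ι ≫ e.inv = q.ι
      rw [← h1']
      exact ((Category.assoc _ _ _).trans (congrArg (q.ι ≫ ·) e.hom_inv_id)).trans (comp_id _)
    · show e.inv ≫ q.π = p.π
      rw [← h2']
      exact e.inv_hom_id_assoc p.π

lemma cls_surjective : Function.Surjective (cls (A := A) (C := C) (B := B)) := by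
  rintro ⟨x, E, hE, ⟨f⟩⟩
  obtain ⟨w', se'⟩ := transport_se E.se (Iso.refl C) f (Iso.refl A)
    (ι₂ := E.ι ≫ f.hom) (π₂ := f.inv ≫ E.π) (by simp) (by simp)
  refine ⟨⟨(E.ι ≫ f.hom, f.inv ≫ E.π), w', se'⟩, ?_⟩
  apply Subtype.ext
  show Quot.mk _ _ = x
  rw [← hE]
  apply Quot.sound
  exact ⟨f.symm, by simp [SES.toRep, SES.ι, SES.π], by simp [SES.toRep, SES.ι, SES.π]⟩

/-- The stabilizer of a short exact sequence is in bijection with `Hom(A, C)`. -/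
noncomputable def stabEquivHom (p : SES A C B) :
    (A ⟶ C) ≃ MulAction.stabilizer (Aut B) p := by
  have hx : ∀ f : A ⟶ C, (p.π ≫ f ≫ p.ι) ≫ (p.π ≫ f ≫ p.ι) = 0 := by
    intro f
    simp [reassoc_of% p.w]
  refine Equiv.ofBijective (fun f =>
    ⟨⟨𝟙 B + p.π ≫ f ≫ p.ι, 𝟙 B - p.π ≫ f ≫ p.ι, ?_, ?_⟩, ?_⟩) ⟨?_, ?_⟩
  · simp only [Preadditive.comp_add, Preadditive.add_comp, Preadditive.comp_sub, Preadditive.sub_comp, id_comp, comp_id, hx f]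
    abel
  · simp only [Preadditive.comp_add, Preadditive.add_comp, Preadditive.comp_sub, Preadditive.sub_comp, id_comp, comp_id, hx f]
    abel
  · refine MulAction.mem_stabilizer_iff.2 ((smul_eq_iff _ _ _).2 ?_)
    constructor
    · show p.ι ≫ (𝟙 B + p.π ≫ f ≫ p.ι) = p.ι
      simp [reassoc_of% p.w]
    · show (𝟙 B + p.π ≫ f ≫ p.ι) ≫ p.π = p.π
      simp [p.w]
  · intro f g hfg
    have h : 𝟙 B + p.π ≫ f ≫ p.ι = 𝟙 B + p.π ≫ g ≫ p.ι := congrArg (fun z => z.1.hom) hfg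
    have h2 : p.π ≫ f ≫ p.ι = p.π ≫ g ≫ p.ι := by
      exact add_left_cancel h
    rw [← cancel_epi p.π, ← cancel_mono p.ι]
    simpa using h2
  · rintro ⟨e, he⟩
    rw [MulAction.mem_stabilizer_iff, smul_eq_iff] at he
    obtain ⟨h1, h2⟩ := he
    haveI := p.se.mono_f
    haveI := p.se.epi_g
    have hd : p.ι ≫ (e.hom - 𝟙 B) = 0 := by
      rw [Preadditive.comp_sub, h1, comp_id, sub_self]
    set g : A ⟶ B := p.se.exact.desc (e.hom - 𝟙 B) hd with hg
    have hgd : p.π ≫ g = e.hom - 𝟙 B := p.se.exact.g_desc _ hd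
    have hgπ : g ≫ p.π = 0 := by
      rw [← cancel_epi p.π, reassoc_of% hgd, Preadditive.sub_comp, id_comp, h2, sub_self, comp_zero]
    set f : A ⟶ C := p.se.exact.lift g hgπ with hf
    have hfι : f ≫ p.ι = g := p.se.exact.lift_f _ hgπ
    refine ⟨f, ?_⟩
    apply Subtype.ext
    apply Iso.ext
    show 𝟙 B + p.π ≫ f ≫ p.ι = e.hom
    rw [hfι, hgd]
    abel

/-- Given a factorization of `p.ι` through a mono `m` by an isomorphism,
the cokernel of `m` is isomorphic to `A`, compatibly with the projections. -/
noncomputable def cokerIsoOfFactor (p : SES A C B) {Y : 𝒜} (m : Y ⟶ B)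
    (u : C ≅ Y) (hu : u.hom ≫ m = p.ι) :
    {v : cokernel m ≅ A // cokernel.π m ≫ v.hom = p.π} := by
  haveI := p.se.epi_g
  have hm : m ≫ p.π = 0 := by
    rw [← cancel_epi u.hom, reassoc_of% hu, p.w, comp_zero]
  have hcol : IsColimit (CokernelCofork.ofπ p.π hm) := by
    refine CokernelCofork.IsColimit.ofπ' p.π hm (fun k hk => ?_)
    have hk' : p.ι ≫ k = 0 := by
      rw [← hu, assoc, hk, comp_zero]
    exact ⟨p.se.exact.desc k hk', p.se.exact.g_desc k hk'⟩
  refine ⟨IsColimit.coconePointUniqueUpToIso (cokernelIsCokernel m) hcol, ?_⟩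
  simpa using IsColimit.comp_coconePointUniqueUpToIso_hom (cokernelIsCokernel m) hcol
    WalkingParallelPair.one

lemma baseSE (S : Subobject B) :
    (ShortComplex.mk S.arrow (cokernel.π S.arrow) (cokernel.condition _)).ShortExact where
  exact := ShortComplex.exact_of_g_is_cokernel _ (cokernelIsCokernel S.arrow)
  mono_f := by dsimp; infer_instance
  epi_g := by dsimp; infer_instance

/-- For a subobject `S` of `B`, the fiber of `SES A C B → Subobject B` over `S`
is in bijection with pairs of isomorphisms. -/
noncomputable def fiberEquivSub (S : Subobject B) :
    {p : SES A C B // Subobject.mk p.ι = S} ≃ ((C ≅ (S : 𝒜)) × (cokernel S.arrow ≅ A)) where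
  toFun q :=
    ⟨Subobject.isoOfMkEq q.1.ι S q.2,
     (cokerIsoOfFactor q.1 S.arrow (Subobject.isoOfMkEq q.1.ι S q.2)
        (Subobject.ofMkLE_arrow _)).1⟩
  invFun uv := ⟨⟨(uv.1.hom ≫ S.arrow, cokernel.π S.arrow ≫ uv.2.hom),
      transport_se (baseSE S) uv.1 (Iso.refl B) uv.2 (by simp) (by simp)⟩,
    (Subobject.mk_eq_mk_of_comm _ S.arrow uv.1 rfl).trans (Subobject.mk_arrow S)⟩
  left_inv q := by
    apply Subtype.ext
    apply SES.ext
    · show (Subobject.isoOfMkEq q.1.ι S q.2).hom ≫ S.arrow = q.1.ι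
      exact Subobject.ofMkLE_arrow _
    · exact (cokerIsoOfFactor q.1 S.arrow (Subobject.isoOfMkEq q.1.ι S q.2)
        (Subobject.ofMkLE_arrow _)).2
  right_inv uv := by
    obtain ⟨u, v⟩ := uv
    have hres := transport_se (baseSE S) u (Iso.refl B) v
      (ι₂ := u.hom ≫ S.arrow) (π₂ := cokernel.π S.arrow ≫ v.hom) (by simp) (by simp)
    set q : {p : SES A C B // Subobject.mk p.ι = S} :=
      ⟨⟨(u.hom ≫ S.arrow, cokernel.π S.arrow ≫ v.hom), hres⟩,
       (Subobject.mk_eq_mk_of_comm _ S.arrow u rfl).trans (Subobject.mk_arrow S)⟩ with hq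
    have hι : q.1.ι = u.hom ≫ S.arrow := rfl
    have hπ : q.1.π = cokernel.π S.arrow ≫ v.hom := rfl
    refine Prod.ext ?_ ?_
    · apply Iso.ext
      rw [← cancel_mono S.arrow]
      show (Subobject.isoOfMkEq q.1.ι S q.2).hom ≫ S.arrow = u.hom ≫ S.arrow
      simp only [Subobject.isoOfMkEq_hom]
      rw [Subobject.ofMkLE_arrow, hι]
    · apply Iso.ext
      rw [← cancel_epi (cokernel.π S.arrow)]
      show cokernel.π S.arrow ≫ _ = cokernel.π S.arrow ≫ v.hom
      rw [(cokerIsoOfFactor q.1 S.arrow (Subobject.isoOfMkEq q.1.ι S q.2)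
        (Subobject.ofMkLE_arrow _)).2, hπ]

/-- Postcomposition with an isomorphism. -/
def isoPostEquiv {X Y : 𝒜} (j : X ≅ Y) : (Y ≅ X) ≃ Aut Y where
  toFun e := e ≪≫ j
  invFun a := a ≪≫ j.symm
  left_inv e := by apply Iso.ext; simp
  right_inv a := by apply Iso.ext; exact (Category.assoc _ _ _).trans ((congrArg (a.hom ≫ ·) j.inv_hom_id).trans (comp_id _))

/-- Precomposition with the inverse of an isomorphism. -/
def isoPreEquiv {X Y : 𝒜} (j : X ≅ Y) : (X ≅ Y) ≃ Aut Y where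
  toFun e := j.symm ≪≫ e
  invFun a := j ≪≫ a
  left_inv e := by apply Iso.ext; simp
  right_inv a := by apply Iso.ext; exact j.inv_hom_id_assoc a.hom

/-- The subobject associated to a short exact sequence. -/
noncomputable def SES.sub (p : SES A C B) :
    {S : Subobject B // Nonempty ((S : 𝒜) ≅ C) ∧ Nonempty (cokernel S.arrow ≅ A)} :=
  ⟨Subobject.mk p.ι, ⟨Subobject.underlyingIso p.ι⟩,
    ⟨(cokerIsoOfFactor p (Subobject.mk p.ι).arrow (Subobject.underlyingIso p.ι).symm
      (Subobject.underlyingIso_arrow p.ι)).1⟩⟩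

theorem card_SES_eq_hallG :
    Nat.card (SES A C B) = hallG 𝒜 A C B * (Nat.card (Aut C) * Nat.card (Aut A)) := by
  have h1 : hallG 𝒜 A C B = Nat.card {S : Subobject B // Nonempty ((S : 𝒜) ≅ C) ∧
      Nonempty (cokernel S.arrow ≅ A)} := rfl
  rw [h1, ← Nat.card_prod, ← Nat.card_prod]
  apply Nat.card_congr
  refine ((Equiv.sigmaFiberEquiv (SES.sub (A := A) (C := C) (B := B))).symm.trans
    (Equiv.sigmaCongrRight fun t => ?_)).trans (Equiv.sigmaEquivProd _ _)
  refine (Equiv.subtypeEquivRight fun p => ?_).trans ((fiberEquivSub t.1).trans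
    (Equiv.prodCongr (isoPostEquiv t.2.1.some) (isoPreEquiv t.2.2.some)))
  constructor
  · rintro rfl
    rfl
  · intro h
    exact Subtype.ext h

theorem card_SES_mul :
    Nat.card (SES A C B) * Nat.card (A ⟶ C)
      = Nat.card (ext1With 𝒜 A C B) * Nat.card (Aut B) := by
  rw [← Nat.card_prod, ← Nat.card_prod]
  apply Nat.card_congr
  refine ((Equiv.prodCongr (Equiv.sigmaFiberEquiv (cls (A := A) (C := C) (B := B))).symm
    (Equiv.refl _)).trans ((Equiv.sigmaProdDistrib _ _).trans
      ((Equiv.sigmaCongrRight fun x => ?_).trans (Equiv.sigmaEquivProd _ _))))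
  have hx := cls_surjective (A := A) (C := C) (B := B) x
  have hp₀ : cls hx.choose = x := hx.choose_spec
  have hiff : ∀ p : SES A C B, p ∈ MulAction.orbit (Aut B) hx.choose ↔ cls p = x := by
    intro p
    rw [mem_orbit_iff_cls_eq, hp₀]
  refine (Equiv.prodCongr (((Equiv.subtypeEquivRight hiff).symm.trans
    (MulAction.orbitEquivQuotientStabilizer (Aut B) hx.choose)))
    (stabEquivHom hx.choose)).trans
    (Subgroup.groupEquivQuotientProdSubgroup
      (s := MulAction.stabilizer (Aut B) hx.choose)).symm

end Riedtmann

/-- the Riedtmann–Peng formula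
`g^B_{A,C} = (|Ext¹(A,C)_B| / |Hom(A,C)|) · (|Aut B| / (|Aut A|·|Aut C|))`. -/
theorem stmt6 [∀ X Y : 𝒜, Finite (X ⟶ Y)] (A C B : 𝒜) :
    (hallG 𝒜 A C B : ℚ) =
      ((Nat.card (ext1With 𝒜 A C B) : ℚ) / (Nat.card (A ⟶ C) : ℚ)) *
        ((Nat.card (Aut B) : ℚ) /
          ((Nat.card (Aut A) : ℚ) * (Nat.card (Aut C) : ℚ))) := by
  haveI hIso : ∀ X Y : 𝒜, Finite (X ≅ Y) := fun X Y =>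
    Finite.of_injective (fun e => ((e.hom, e.inv) : (X ⟶ Y) × (Y ⟶ X)))
      (fun e f h => Iso.ext (congrArg Prod.fst h))
  haveI : Finite (Aut A) := hIso A A
  haveI : Finite (Aut C) := hIso C C
  haveI : Nonempty (Aut A) := ⟨Iso.refl A⟩
  haveI : Nonempty (Aut C) := ⟨Iso.refl C⟩
  have hHom : 0 < Nat.card (A ⟶ C) := Nat.card_pos
  have hA : 0 < Nat.card (Aut A) := Nat.card_pos
  have hC : 0 < Nat.card (Aut C) := Nat.card_pos
  have keyN : hallG 𝒜 A C B * (Nat.card (Aut C) * Nat.card (Aut A)) * Nat.card (A ⟶ C)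
      = Nat.card (ext1With 𝒜 A C B) * Nat.card (Aut B) := by
    rw [← card_SES_eq_hallG]
    exact card_SES_mul
  have key : (hallG 𝒜 A C B : ℚ) * ((Nat.card (Aut C) : ℚ) * (Nat.card (Aut A) : ℚ))
      * (Nat.card (A ⟶ C) : ℚ)
      = (Nat.card (ext1With 𝒜 A C B) : ℚ) * (Nat.card (Aut B) : ℚ) := by
    exact_mod_cast keyN
  have h0 : (Nat.card (A ⟶ C) : ℚ) ≠ 0 := by
    exact_mod_cast hHom.ne'
  have hA0 : (Nat.card (Aut A) : ℚ) ≠ 0 := by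
    exact_mod_cast hA.ne'
  have hC0 : (Nat.card (Aut C) : ℚ) ≠ 0 := by
    exact_mod_cast hC.ne'
  field_simp
  linear_combination key
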